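/- Let A be a continuous map from ℝ into a unital Banach algebra 𝒜, let t_0 ∈ ℝ, h ≥ 0, and n ≥ 1. Then the n-th Mielnik–Plebański term satisfies ‖Ω_n(t_0,h)‖ ≤ (1/n) · (∫_{t_0}^{t_0+h} ‖A(τ)‖ dτ)^n. -/

import Mathlib

open scoped Nat
open MeasureTheory

/-- `Θₙ(t) = θ(tₙ > tₙ₋₁) + ⋯ + θ(t₂ > t₁)` (here `t i` represents `t_{i+1}`). -/
noncomputable def MagnusTheta (n : ℕ) (t : Fin n → ℝ) : ℕ :=
  ∑ i : Fin n, if h : (i : ℕ) + 1 < n then (if t i < t ⟨(i : ℕ) + 1, h⟩ then 1 else 0) else 0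

/-- The Mielnik–Plebański kernel `Lₙ(tₙ, …, t₁)`. -/
noncomputable def MPKernel (n : ℕ) (t : Fin n → ℝ) : ℝ :=
  (-1 : ℝ) ^ (n - 1 - MagnusTheta n t) * (MagnusTheta n t)! * ((n - 1 - MagnusTheta n t)! : ℝ)
    / (n ! : ℝ)

/-- The `n`-th Mielnik–Plebański term of the Magnus expansion:
`Ωₙ(t₀,h) = ∫_{[t₀,t₀+h]ⁿ} Lₙ(tₙ,…,t₁) A(tₙ)⋯A(t₁) dt₁⋯dtₙ`
(an `n`-fold Bochner integral over the cube `[t₀, t₀+h]ⁿ`). -/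
noncomputable def MagnusTerm {𝒜 : Type*} [NormedRing 𝒜] [NormedAlgebra ℝ 𝒜] [CompleteSpace 𝒜]
    (A : ℝ → 𝒜) (t₀ h : ℝ) (n : ℕ) : 𝒜 :=
  ∫ t : Fin n → ℝ in Set.univ.pi (fun _ => Set.Icc t₀ (t₀ + h)),
    MPKernel n t • ((List.ofFn fun i : Fin n => A (t i)).reverse).prod

lemma MagnusTheta_le (n : ℕ) (hn : 1 ≤ n) (t : Fin n → ℝ) : MagnusTheta n t ≤ n - 1 := by
  have hlast : (n - 1 : ℕ) < n := Nat.sub_lt hn one_pos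
  have hzero : (if h : ((⟨n - 1, hlast⟩ : Fin n) : ℕ) + 1 < n then
      (if t ⟨n - 1, hlast⟩ < t ⟨((⟨n - 1, hlast⟩ : Fin n) : ℕ) + 1, h⟩ then 1 else 0) else 0) = 0 := by
    rw [dif_neg]
    simp only
    omega
  have := Finset.sum_erase (f := fun i : Fin n =>
      if h : (i : ℕ) + 1 < n then (if t i < t ⟨(i : ℕ) + 1, h⟩ then 1 else 0) else 0)
      (Finset.univ) hzero
  rw [MagnusTheta, ← this]
  calc (Finset.univ.erase (⟨n - 1, hlast⟩ : Fin n)).sum (fun i =>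
        if h : (i : ℕ) + 1 < n then (if t i < t ⟨(i : ℕ) + 1, h⟩ then 1 else 0) else 0)
      ≤ (Finset.univ.erase (⟨n - 1, hlast⟩ : Fin n)).sum (fun _ => 1) := by
        apply Finset.sum_le_sum
        intro i _
        split <;> [skip; omega]
        split <;> omega
    _ = n - 1 := by
        rw [Finset.sum_const, smul_eq_mul, mul_one, Finset.card_erase_of_mem (Finset.mem_univ _),
          Finset.card_univ, Fintype.card_fin]

lemma abs_MPKernel_le (n : ℕ) (hn : 1 ≤ n) (t : Fin n → ℝ) : |MPKernel n t| ≤ 1 / n := by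
  have hΘ := MagnusTheta_le n hn t
  set k := MagnusTheta n t with hk
  have hfact : (k ! * (n - 1 - k)! : ℕ) ≤ (n - 1)! := by
    have hd : (k ! * (n - 1 - k)! : ℕ) ∣ (n - 1)! :=
      Nat.factorial_mul_factorial_dvd_factorial hΘ
    exact Nat.le_of_dvd (Nat.factorial_pos _) hd
  have hnum : |MPKernel n t| = (k ! * (n - 1 - k)! : ℕ) / (n ! : ℝ) := by
    rw [MPKernel, abs_div, abs_mul, abs_mul, abs_pow, abs_neg, abs_one, one_pow, one_mul]
    push_cast
    rw [abs_of_nonneg (by positivity), abs_of_nonneg (by positivity),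
      abs_of_nonneg (by positivity)]
  rw [hnum]
  rw [div_le_div_iff₀ (by positivity) (by positivity)]
  calc ((k ! * (n - 1 - k)! : ℕ) : ℝ) * n ≤ ((n - 1)! : ℝ) * n := by
        apply mul_le_mul_of_nonneg_right _ (by positivity)
        exact_mod_cast hfact
    _ = 1 * (n ! : ℝ) := by
        rw [one_mul]
        rw_mod_cast [mul_comm]
        rw [← Nat.succ_pred_eq_of_pos (by omega : 0 < n)]
        rw [Nat.factorial_succ]
        simp [Nat.succ_pred_eq_of_pos (by omega : 0 < n)]

/-- For a continuous map `A` into a unital Banach algebra, `t₀ ∈ ℝ`, `h ≥ 0` and `n ≥ 1`,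
the `n`-th Mielnik–Plebański term satisfies
`‖Ωₙ(t₀,h)‖ ≤ (1/n) · (∫_{t₀}^{t₀+h} ‖A(τ)‖ dτ)ⁿ`. -/
theorem MagnusTerm_norm_le {𝒜 : Type*} [NormedRing 𝒜] [NormedAlgebra ℝ 𝒜] [CompleteSpace 𝒜]
    (A : ℝ → 𝒜) (hA : Continuous A) (t₀ h : ℝ) (hh : 0 ≤ h) (n : ℕ) (hn : 1 ≤ n) :
    ‖MagnusTerm A t₀ h n‖ ≤ (1 / n) * (∫ τ in t₀..(t₀ + h), ‖A τ‖) ^ n := by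
  set S : Set (Fin n → ℝ) := Set.univ.pi (fun _ => Set.Icc t₀ (t₀ + h)) with hSdef
  have hSm : MeasurableSet S := MeasurableSet.univ_pi fun _ => measurableSet_Icc
  have hSc : IsCompact S := isCompact_univ_pi fun _ => isCompact_Icc
  -- pointwise bound
  have key : ∀ t : Fin n → ℝ,
      ‖MPKernel n t • ((List.ofFn fun i : Fin n => A (t i)).reverse).prod‖
      ≤ (1 / n) * ∏ i : Fin n, ‖A (t i)‖ := by
    intro t
    rw [norm_smul, Real.norm_eq_abs]
    have hne : (List.ofFn fun i : Fin n => A (t i)).reverse ≠ [] := by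
      simp [← List.length_pos_iff]
      omega
    have hP : ‖((List.ofFn fun i : Fin n => A (t i)).reverse).prod‖ ≤ ∏ i : Fin n, ‖A (t i)‖ := by
      refine (List.norm_prod_le' hne).trans_eq ?_
      simp [List.map_reverse, List.prod_reverse, List.map_ofFn, List.prod_ofFn, Function.comp]
    exact mul_le_mul (abs_MPKernel_le n hn t) hP (norm_nonneg _)
      (by positivity)
  -- integrability of the bound
  have hcont : Continuous fun t : Fin n → ℝ => (1 / n : ℝ) * ∏ i : Fin n, ‖A (t i)‖ :=
    continuous_const.mul (continuous_finset_prod _ fun i _ => (hA.norm).comp (continuous_apply i))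
  have hint : IntegrableOn (fun t : Fin n → ℝ => (1 / n : ℝ) * ∏ i : Fin n, ‖A (t i)‖) S :=
    hcont.continuousOn.integrableOn_compact hSc
  have step1 : ‖MagnusTerm A t₀ h n‖
      ≤ ∫ t in S, (1 / n : ℝ) * ∏ i : Fin n, ‖A (t i)‖ := by
    refine (norm_integral_le_integral_norm _).trans ?_
    refine integral_mono_of_nonneg (Filter.Eventually.of_forall fun t => norm_nonneg _) hint
      (Filter.Eventually.of_forall fun t => key t)
  have step2 : ∫ t in S, (1 / n : ℝ) * ∏ i : Fin n, ‖A (t i)‖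
      = (1 / n : ℝ) * ∫ t in S, ∏ i : Fin n, ‖A (t i)‖ := integral_const_mul _ _
  have step3 : ∫ t in S, ∏ i : Fin n, ‖A (t i)‖
      = (∫ τ in Set.Icc t₀ (t₀ + h), ‖A τ‖) ^ n := by
    rw [← integral_indicator hSm]
    have hind : S.indicator (fun t : Fin n → ℝ => ∏ i : Fin n, ‖A (t i)‖)
        = fun t : Fin n → ℝ =>
            ∏ i : Fin n, (Set.Icc t₀ (t₀ + h)).indicator (fun τ => ‖A τ‖) (t i) := by
      funext t
      by_cases ht : t ∈ S
      · rw [Set.indicator_of_mem ht]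
        refine Finset.prod_congr rfl fun i _ => ?_
        rw [Set.indicator_of_mem (ht i trivial)]
      · rw [Set.indicator_of_notMem ht]
        have hne' : ¬ ∀ i, t i ∈ Set.Icc t₀ (t₀ + h) := fun hall => ht (Set.mem_univ_pi.mpr hall)
        obtain ⟨i, hi⟩ := not_forall.mp hne'
        exact (Finset.prod_eq_zero (Finset.mem_univ i) (Set.indicator_of_notMem hi _)).symm
    rw [hind,
      MeasureTheory.integral_fintype_prod_volume_eq_prod (ι := Fin n)
        (f := fun _ τ => (Set.Icc t₀ (t₀ + h)).indicator (fun τ => ‖A τ‖) τ)]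
    rw [Finset.prod_const, Finset.card_univ, Fintype.card_fin,
      integral_indicator measurableSet_Icc]
  have step4 : (∫ τ in Set.Icc t₀ (t₀ + h), ‖A τ‖) = ∫ τ in t₀..(t₀ + h), ‖A τ‖ := by
    rw [intervalIntegral.integral_of_le (by linarith), integral_Icc_eq_integral_Ioc]
  calc ‖MagnusTerm A t₀ h n‖ ≤ _ := step1
    _ = (1 / n : ℝ) * (∫ τ in t₀..(t₀ + h), ‖A τ‖) ^ n := by rw [step2, step3, step4]
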